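/- Let n be even and fix plant matrices A, B, C ∈ ℝ^{n×n}, B_w, D_w ∈ ℝ^{n×n_w}, C_z, D_z ∈ ℝ^{n_z×n}, a real skew-symmetric matrix Θ̂_K ∈ ℝ^{n×n}, and γ > 0. Suppose the matrices Â_K, B̂_K1, B̂_K2, B̂_K3, Ĉ_K ∈ ℝ^{n×n} together with Θ̂_K solve the quantum LQG problem with bound γ: there exists a symmetric positive definite P ∈ ℝ^{2n×2n} with 𝒜̂P + P𝒜̂ᵀ + ℬ̂ℬ̂ᵀ = 0 and tr(𝒞̂P𝒞̂ᵀ) < γ (where 𝒜̂, ℬ̂, 𝒞̂ are the closed-loop matrices built from the hatted controller matrices), and the physical realizability constraints hold with Θ̂_K. Suppose further Θ̂_K = S Z Sᵀ for some invertible S ∈ ℝ^{n×n} and some matrix Z. Then the matrices A_K = S⁻¹Â_K S, B_Ki = S⁻¹B̂_Ki (i = 1,2,3), C_K = Ĉ_K S solve the quantum LQG problem with bound γ and commutation matrix Θ_K = Z: there exists a symmetric positive definite P' ∈ ℝ^{2n×2n} with 𝒜P' + P'𝒜ᵀ + ℬℬᵀ = 0 and tr(𝒞P'𝒞ᵀ)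 < γ for the corresponding closed-loop matrices, and the physical realizability constraints hold with Z. -/

import Mathlib

noncomputable section
open Matrix

/-- The `n × n` block-diagonal matrix `diag(J, …, J)` with `n/2` copies of
`J = [[0,1],[-1,0]]` on the diagonal (for even `n`). -/
def Jblock (n : ℕ) : Matrix (Fin n) (Fin n) ℝ :=
  Matrix.of fun i j =>
    if i.val + 1 = j.val ∧ i.val % 2 = 0 then (1 : ℝ)
    else if j.val + 1 = i.val ∧ j.val % 2 = 0 then (-1 : ℝ) else 0

/-- Closed-loop `𝒜 = [[A, B C_K],[B_K3 C, A_K]]`. -/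
def clA (n : ℕ) (A B C AK BK3 CK : Matrix (Fin n) (Fin n) ℝ) :
    Matrix (Fin n ⊕ Fin n) (Fin n ⊕ Fin n) ℝ :=
  Matrix.fromBlocks A (B * CK) (BK3 * C) AK

/-- Closed-loop `ℬ = [[B_w, B, 0],[B_K3 D_w, B_K1, B_K2]]`. -/
def clB (n nw : ℕ) (B : Matrix (Fin n) (Fin n) ℝ) (Bw Dw : Matrix (Fin n) (Fin nw) ℝ)
    (BK1 BK2 BK3 : Matrix (Fin n) (Fin n) ℝ) :
    Matrix (Fin n ⊕ Fin n) (Fin nw ⊕ (Fin n ⊕ Fin n)) ℝ :=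
  Matrix.fromBlocks Bw (Matrix.fromCols B 0) (BK3 * Dw) (Matrix.fromCols BK1 BK2)

/-- Closed-loop `𝒞 = [C_z, D_z C_K]`. -/
def clC (n nz : ℕ) (Cz Dz : Matrix (Fin nz) (Fin n) ℝ)
    (CK : Matrix (Fin n) (Fin n) ℝ) : Matrix (Fin nz) (Fin n ⊕ Fin n) ℝ :=
  Matrix.fromCols Cz (Dz * CK)

/-- The physical realizability constraints with commutation matrix `Θ_K`. -/
def PhysReal (n : ℕ) (ΘK AK BK1 BK2 BK3 CK : Matrix (Fin n) (Fin n) ℝ) : Prop :=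
  AK * ΘK + ΘK * AKᵀ
      + BK1 * Jblock n * BK1ᵀ + BK2 * Jblock n * BK2ᵀ + BK3 * Jblock n * BK3ᵀ = 0 ∧
  BK1 = ΘK * CKᵀ * Jblock n


section Aux
open Matrix

lemma conjT_eq_transpose' {m p : Type*} (M : Matrix m p ℝ) : Mᴴ = Mᵀ := by
  ext i j; simp [Matrix.conjTranspose_apply]

lemma posDef_conj' {m : Type*} [Fintype m] [DecidableEq m]
    {P : Matrix m m ℝ} (hP : P.PosDef) (T Ti : Matrix m m ℝ)
    (hTTi : T * Ti = 1) (hTiT : Ti * T = 1) :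
    (T * P * Tᵀ).PosDef := by
  have h1 : Tᵀ * Tiᵀ = 1 := by rw [← Matrix.transpose_mul, hTiT, Matrix.transpose_one]
  have h2' : Tiᵀ * Tᵀ = 1 := by rw [← Matrix.transpose_mul, hTTi, Matrix.transpose_one]
  have hUT : IsUnit Tᵀ := ⟨⟨Tᵀ, Tiᵀ, h1, h2'⟩, rfl⟩
  have hinj : Function.Injective (Tᵀ).mulVec := Matrix.mulVec_injective_iff_isUnit.2 hUT
  have hEq : T * P * Tᵀ = (Tᵀ)ᴴ * P * Tᵀ := by
    rw [conjT_eq_transpose', Matrix.transpose_transpose]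
  refine Matrix.PosDef.of_dotProduct_mulVec_pos ?_ ?_
  · rw [hEq]
    exact Matrix.isHermitian_conjTranspose_mul_mul _ hP.1
  · intro x hx
    have hx' : Tᵀ *ᵥ x ≠ 0 := by
      intro h
      exact hx (hinj (by simpa [Matrix.mulVec_zero] using h))
    have h2 := hP.dotProduct_mulVec_pos hx'
    rw [hEq]
    simpa only [star_mulVec, dotProduct_mulVec, vecMul_vecMul] using h2

lemma lyap_conj' {m p : Type*} [Fintype m] [Fintype p] [DecidableEq m]
    (T Ti : Matrix m m ℝ) (hTiT : Ti * T = 1)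
    (Ac P : Matrix m m ℝ) (Bc : Matrix m p ℝ)
    (h : Ac * P + P * Acᵀ + Bc * Bcᵀ = 0) :
    (T * Ac * Ti) * (T * P * Tᵀ) + (T * P * Tᵀ) * (T * Ac * Ti)ᵀ
      + (T * Bc) * (T * Bc)ᵀ = 0 := by
  have h1 : Tᵀ * Tiᵀ = 1 := by rw [← Matrix.transpose_mul, hTiT, Matrix.transpose_one]
  have c1 : ∀ X : Matrix m m ℝ, Ti * (T * X) = X := fun X => by
    rw [← Matrix.mul_assoc, hTiT, Matrix.one_mul]
  have c2 : ∀ X : Matrix m m ℝ, Tᵀ * (Tiᵀ * X) = X := fun X => by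
    rw [← Matrix.mul_assoc, h1, Matrix.one_mul]
  have key : (T * Ac * Ti) * (T * P * Tᵀ) + (T * P * Tᵀ) * (T * Ac * Ti)ᵀ
      + (T * Bc) * (T * Bc)ᵀ = T * (Ac * P + P * Acᵀ + Bc * Bcᵀ) * Tᵀ := by
    simp only [Matrix.transpose_mul, Matrix.mul_add, Matrix.add_mul, Matrix.mul_assoc, c1, c2]
  rw [key, h, Matrix.mul_zero, Matrix.zero_mul]

end Aux

/-- a solution of the quantum LQG problem with commutation matrix
`Θ̂_K = S Z Sᵀ` transforms to a solution with commutation matrix `Z`. -/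
theorem quantum_lqg_commutation_transform
    (n nw nz : ℕ) (hne : Even n)
    (A B C : Matrix (Fin n) (Fin n) ℝ)
    (Bw Dw : Matrix (Fin n) (Fin nw) ℝ)
    (Cz Dz : Matrix (Fin nz) (Fin n) ℝ)
    (ΘKh : Matrix (Fin n) (Fin n) ℝ) (hskew : ΘKhᵀ = -ΘKh)
    (γ : ℝ) (hγ : 0 < γ)
    (AKh BK1h BK2h BK3h CKh : Matrix (Fin n) (Fin n) ℝ)
    (hlqg : ∃ P : Matrix (Fin n ⊕ Fin n) (Fin n ⊕ Fin n) ℝ, P.PosDef ∧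
      clA n A B C AKh BK3h CKh * P + P * (clA n A B C AKh BK3h CKh)ᵀ
        + clB n nw B Bw Dw BK1h BK2h BK3h * (clB n nw B Bw Dw BK1h BK2h BK3h)ᵀ = 0 ∧
      (clC n nz Cz Dz CKh * P * (clC n nz Cz Dz CKh)ᵀ).trace < γ)
    (hpr : PhysReal n ΘKh AKh BK1h BK2h BK3h CKh)
    (S Z : Matrix (Fin n) (Fin n) ℝ) (hS : IsUnit S.det)
    (hZ : ΘKh = S * Z * Sᵀ) :
    -- the transformed controller
    let AK := S⁻¹ * AKh * S
    let BK1 := S⁻¹ * BK1h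
    let BK2 := S⁻¹ * BK2h
    let BK3 := S⁻¹ * BK3h
    let CK := CKh * S
    (∃ P' : Matrix (Fin n ⊕ Fin n) (Fin n ⊕ Fin n) ℝ, P'.PosDef ∧
      clA n A B C AK BK3 CK * P' + P' * (clA n A B C AK BK3 CK)ᵀ
        + clB n nw B Bw Dw BK1 BK2 BK3 * (clB n nw B Bw Dw BK1 BK2 BK3)ᵀ = 0 ∧
      (clC n nz Cz Dz CK * P' * (clC n nz Cz Dz CK)ᵀ).trace < γ) ∧
    PhysReal n Z AK BK1 BK2 BK3 CK := by
  intro AK BK1 BK2 BK3 CK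
  obtain ⟨P, hP, heq, htr⟩ := hlqg
  have hSiS : S⁻¹ * S = 1 := Matrix.nonsing_inv_mul S hS
  have hSSi : S * S⁻¹ = 1 := Matrix.mul_nonsing_inv S hS
  set T : Matrix (Fin n ⊕ Fin n) (Fin n ⊕ Fin n) ℝ := Matrix.fromBlocks 1 0 0 S⁻¹ with hT
  set Ti : Matrix (Fin n ⊕ Fin n) (Fin n ⊕ Fin n) ℝ := Matrix.fromBlocks 1 0 0 S with hTi
  have hTTi : T * Ti = 1 := by
    rw [hT, hTi, Matrix.fromBlocks_multiply]
    simp [hSiS, Matrix.fromBlocks_one]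
  have hTiT : Ti * T = 1 := by
    rw [hT, hTi, Matrix.fromBlocks_multiply]
    simp [hSSi, Matrix.fromBlocks_one]
  have hA' : clA n A B C AK BK3 CK = T * clA n A B C AKh BK3h CKh * Ti := by
    rw [hT, hTi]
    simp only [clA, AK, BK3, CK, Matrix.fromBlocks_multiply]
    simp [Matrix.mul_assoc]
  have hB' : clB n nw B Bw Dw BK1 BK2 BK3 = T * clB n nw B Bw Dw BK1h BK2h BK3h := by
    rw [hT]
    simp only [clB, BK1, BK2, BK3, Matrix.fromBlocks_multiply]
    simp [Matrix.mul_fromCols, Matrix.mul_assoc]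
  have hC' : clC n nz Cz Dz CK = clC n nz Cz Dz CKh * Ti := by
    rw [hTi]
    simp only [clC, CK, Matrix.fromCols_mul_fromBlocks]
    simp [Matrix.mul_assoc]
  refine ⟨⟨T * P * Tᵀ, posDef_conj' hP T Ti hTTi hTiT, ?_, ?_⟩, ?_, ?_⟩
  · rw [hA', hB']
    exact lyap_conj' T Ti hTiT _ P _ heq
  · rw [hC']
    have h1 : Tᵀ * Tiᵀ = 1 := by rw [← Matrix.transpose_mul, hTiT, Matrix.transpose_one]
    have c1 : ∀ (X : Matrix (Fin n ⊕ Fin n) (Fin nz) ℝ), Ti * (T * X) = X := fun X => by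
      rw [← Matrix.mul_assoc, hTiT, Matrix.one_mul]
    have c2 : ∀ (X : Matrix (Fin n ⊕ Fin n) (Fin nz) ℝ), Tᵀ * (Tiᵀ * X) = X := fun X => by
      rw [← Matrix.mul_assoc, h1, Matrix.one_mul]
    have : clC n nz Cz Dz CKh * Ti * (T * P * Tᵀ) * (clC n nz Cz Dz CKh * Ti)ᵀ
        = clC n nz Cz Dz CKh * P * (clC n nz Cz Dz CKh)ᵀ := by
      simp only [Matrix.transpose_mul, Matrix.mul_assoc, c1, c2]
    rw [this]
    exact htr
  · -- first PR equation
    have h0 := hpr.1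
    rw [hZ] at h0
    have hexp : AK * Z + Z * AKᵀ + BK1 * Jblock n * BK1ᵀ + BK2 * Jblock n * BK2ᵀ
        + BK3 * Jblock n * BK3ᵀ
        = S⁻¹ * (AKh * (S * Z * Sᵀ) + (S * Z * Sᵀ) * AKhᵀ + BK1h * Jblock n * BK1hᵀ
            + BK2h * Jblock n * BK2hᵀ + BK3h * Jblock n * BK3hᵀ) * (S⁻¹)ᵀ := by
      have hST : Sᵀ * (S⁻¹)ᵀ = 1 := by
        rw [← Matrix.transpose_mul, hSiS, Matrix.transpose_one]
      have c3 : ∀ (X : Matrix (Fin n) (Fin n) ℝ), S⁻¹ * (S * X) = X := fun X => by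
        rw [← Matrix.mul_assoc, hSiS, Matrix.one_mul]
      have c4 : ∀ (X : Matrix (Fin n) (Fin n) ℝ), Sᵀ * ((S⁻¹)ᵀ * X) = X := fun X => by
        rw [← Matrix.mul_assoc, hST, Matrix.one_mul]
      simp only [AK, BK1, BK2, BK3, Matrix.transpose_mul, Matrix.mul_add, Matrix.add_mul,
        Matrix.mul_assoc, c3, c4, hST, hSiS, Matrix.mul_one]
    rw [hexp, h0, Matrix.mul_zero, Matrix.zero_mul]
  · -- second PR equation
    have h0 := hpr.2
    rw [hZ] at h0
    simp only [BK1, CK, h0, Matrix.transpose_mul, Matrix.mul_assoc]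
    rw [← Matrix.mul_assoc S⁻¹ S, hSiS, Matrix.one_mul]
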